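/- Let S be a numerical semigroup with pseudo-Frobenius set PF(S) = {x_1 > x_2 > ... > x_t} (so x_1 = f(S)). Then for every r with 1 ≤ r ≤ t, the set T = S ∪ {x_1, ..., x_r} is a numerical semigroup. -/
import Mathlib


/-- A numerical semigroup: an additive submonoid of ℕ with finite complement. -/
structure NumSgp where
  carrier : Set ℕ
  zero_mem : 0 ∈ carrier
  add_mem : ∀ ⦃a b : ℕ⦄, a ∈ carrier → b ∈ carrier → a + b ∈ carrier
  cofinite : carrierᶜ.Finite

/-- The multiplicity: the smallest nonzero element. -/
noncomputable def NumSgp.mult (S : NumSgp) : ℕ := sInf {n | n ∈ S.carrier ∧ n ≠ 0}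

/-- The Apéry set of `S` with respect to `s`: elements `x ∈ S` with `x - s ∉ S`
(over the integers, i.e. there is no `y ∈ S` with `y + s = x`). -/
def NumSgp.Ap (S : NumSgp) (s : ℕ) : Set ℕ :=
  {x | x ∈ S.carrier ∧ ∀ y ∈ S.carrier, y + s ≠ x}

/-- `z` is an Arf element of `S`. -/
def NumSgp.ArfElem (S : NumSgp) (z : ℕ) : Prop :=
  ∀ x ∈ S.carrier, ∀ y ∈ S.carrier, z ≤ x → z ≤ y → x + y - z ∈ S.carrier

/-- The minimal generating set: nonzero elements not expressible as a sum of two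
nonzero elements of `S`. -/
def NumSgp.minGen (S : NumSgp) : Set ℕ :=
  {x | x ∈ S.carrier ∧ x ≠ 0 ∧ ∀ a ∈ S.carrier, ∀ b ∈ S.carrier, a ≠ 0 → b ≠ 0 → a + b ≠ x}

/-- The embedding dimension: the cardinality of the minimal generating set. -/
noncomputable def NumSgp.edim (S : NumSgp) : ℕ := S.minGen.ncard

/-- The Frobenius number: the largest gap. -/
noncomputable def NumSgp.frob (S : NumSgp) : ℕ := sSup S.carrierᶜ

/-- The conductor: the smallest `c` with `c + ℤ≥0 ⊆ S`. -/
noncomputable def NumSgp.cond (S : NumSgp) : ℕ := sInf {c | ∀ n, c ≤ n → n ∈ S.carrier}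

/-- The genus: the number of gaps. -/
noncomputable def NumSgp.genus (S : NumSgp) : ℕ := S.carrierᶜ.ncard

/-- The set of pseudo-Frobenius numbers. -/
def NumSgp.PF (S : NumSgp) : Set ℕ :=
  {x | x ∉ S.carrier ∧ ∀ s ∈ S.carrier, s ≠ 0 → x + s ∈ S.carrier}

/-- The type of `S`: the number of pseudo-Frobenius numbers. -/
noncomputable def NumSgp.type (S : NumSgp) : ℕ := S.PF.ncard

/-- `S` is a MED semigroup: its multiplicity is an Arf element, i.e. for all
`x, y ∈ S` with `x, y ≥ m(S)`, `x + y - m(S) ∈ S`. -/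
def NumSgp.IsMED (S : NumSgp) : Prop := S.ArfElem S.mult

/-- The MED closure of `S`: the intersection of all MED numerical semigroups
containing `S` with the same multiplicity. -/
def NumSgp.MEDclosure (S : NumSgp) : Set ℕ :=
  ⋂ T ∈ {T : NumSgp | S.carrier ⊆ T.carrier ∧ T.mult = S.mult ∧ T.IsMED}, T.carrier

theorem union_top_pf_is_semigroup (S : NumSgp) (r : ℕ) (X : Finset ℕ)
    (hXPF : ↑X ⊆ S.PF) (hr : X.card = r) (hr1 : 1 ≤ r) (hrt : r ≤ S.PF.ncard)
    (htop : ∀ x ∈ X, ∀ y ∈ S.PF, y ∉ X → y < x) :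
    ∃ T : NumSgp, T.carrier = S.carrier ∪ ↑X := by
  refine ⟨⟨S.carrier ∪ ↑X, Or.inl S.zero_mem, ?_, ?_⟩, rfl⟩
  · rintro a b (ha | ha) (hb | hb)
    · exact Or.inl (S.add_mem ha hb)
    · rcases eq_or_ne a 0 with rfl | h
      · exact Or.inr (by simpa using hb)
      · exact Or.inl (by rw [add_comm]; exact (hXPF hb).2 a ha h)
    · rcases eq_or_ne b 0 with rfl | h
      · exact Or.inr (by simpa using ha)
      · exact Or.inl ((hXPF ha).2 b hb h)
    · by_cases hab : a + b ∈ S.carrier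
      · exact Or.inl hab
      · have hb0 : b ≠ 0 := fun h => (hXPF hb).1 (h ▸ S.zero_mem)
        have habPF : a + b ∈ S.PF := by
          refine ⟨hab, fun s hs hs0 => ?_⟩
          have h1 : a + s ∈ S.carrier := (hXPF ha).2 s hs hs0
          have h2 : a + s ≠ 0 := by omega
          have := (hXPF hb).2 (a + s) h1 h2
          rwa [show a + b + s = b + (a + s) by ring]
        right
        by_contra hnot
        have := htop a ha (a + b) habPF hnot
        omega
  · exact S.cofinite.subset (fun x hx => by
      simp only [Set.mem_compl_iff, Set.mem_union] at hx ⊢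
      exact fun h => hx (Or.inl h))
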